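/- Let k be a field that is not algebraically closed, X an affine k-variety, and Z ⊂ X a closed subvariety. If f is a rational function on Z that is regular at every k-point of Z, then there exists a rational function F on X, regular at every k-point of X, such that F|_Z = f. -/

import Mathlib

open MvPolynomial

/-- An algebraic subset of affine `n`-space over `k`: the common zero set of a
family of polynomials. -/
def IsAlgSet {k : Type*} [Field k] {n : ℕ} (V : Set (Fin n → k)) : Prop :=
  ∃ S : Set (MvPolynomial (Fin n) k), V = {x | ∀ p ∈ S, eval x p = 0}

/-- `f` is regular at every point of `A`: at each point of `A` it can be written as
a quotient of polynomials with nonvanishing denominator. -/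
def RegularOn {k : Type*} [Field k] {n : ℕ} (f : (Fin n → k) → k) (A : Set (Fin n → k)) : Prop :=
  ∀ x ∈ A, ∃ p q : MvPolynomial (Fin n) k, eval x q ≠ 0 ∧
    ∀ y ∈ A, eval y q ≠ 0 → f y = eval y p / eval y q

open MvPolynomial Finset

namespace Stmt19Aux

/-- Key field computation: the numerator identity for the combined fraction. -/
theorem key_st {K : Type*} [Field K] (c : ℕ → K) (d : ℕ) (hd : 1 ≤ d)
    (fy A B P1 P2 : K) (hA : fy * A = P1) (hB : fy * B = P2) :
    fy * (∑ j ∈ Finset.range (d + 1), c j * A ^ j * B ^ (d - j)) =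
      c 0 * P2 * B ^ (d - 1) +
        ∑ j ∈ Finset.range d, c (j + 1) * P1 * A ^ j * B ^ (d - 1 - j) := by
  rw [Finset.mul_sum, Finset.sum_range_succ', add_comm]
  congr 1
  · have h1 : d - 0 = (d - 1) + 1 := by omega
    rw [← hB, h1, pow_succ]
    ring
  · apply Finset.sum_congr rfl
    intro j hj
    have h2 : d - (j + 1) = d - 1 - j := by omega
    rw [← hA, h2, pow_succ]
    ring

/-- Key field computation: the denominator vanishes only if both inputs do. -/
theorem key_nz {K : Type*} [Field K] (pp : Polynomial K)
    (hroot : ∀ a : K, pp.eval a ≠ 0) (hd : 1 ≤ pp.natDegree) (A B : K)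
    (h : ∑ j ∈ Finset.range (pp.natDegree + 1),
        pp.coeff j * A ^ j * B ^ (pp.natDegree - j) = 0) : A = 0 ∧ B = 0 := by
  set d := pp.natDegree with hdd
  have hp0 : pp ≠ 0 := fun h0 => hroot 0 (by simp [h0])
  by_cases hB : B = 0
  · subst hB
    rw [Finset.sum_range_succ] at h
    have hz : ∀ j ∈ Finset.range d, pp.coeff j * A ^ j * (0:K) ^ (d - j) = 0 := by
      intro j hj
      rw [Finset.mem_range] at hj
      rw [zero_pow (by omega : d - j ≠ 0)]
      ring
    rw [Finset.sum_eq_zero hz, zero_add, Nat.sub_self, pow_zero, mul_one] at h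
    have hcd : pp.coeff d ≠ 0 := by
      rw [hdd]
      exact Polynomial.leadingCoeff_ne_zero.mpr hp0
    have : A ^ d = 0 := by
      rcases mul_eq_zero.mp h with h' | h'
      · exact absurd h' hcd
      · exact h'
    exact ⟨pow_eq_zero_iff (by omega : d ≠ 0) |>.mp this, rfl⟩
  · exfalso
    have heval : pp.eval (A / B) = ∑ j ∈ Finset.range (d + 1), pp.coeff j * (A / B) ^ j :=
      Polynomial.eval_eq_sum_range (x := A / B) (p := pp)
    have hBd : (B : K) ^ d ≠ 0 := pow_ne_zero _ hB
    have hmul : B ^ d * pp.eval (A / B) = ∑ j ∈ Finset.range (d + 1),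
        pp.coeff j * A ^ j * B ^ (d - j) := by
      rw [heval, Finset.mul_sum]
      apply Finset.sum_congr rfl
      intro j hj
      rw [Finset.mem_range] at hj
      have hjd : j ≤ d := by omega
      rw [div_pow]
      have hBj : (B : K) ^ j ≠ 0 := pow_ne_zero _ hB
      field_simp
      have hBB : B ^ (d - j) * B ^ j = B ^ d := by
        rw [← pow_add]; congr 1; omega
      rw [← hBB]; ring
    rw [h] at hmul
    exact (mul_ne_zero hBd (hroot (A / B))) hmul

end Stmt19Aux
open MvPolynomial Finset

namespace Stmt19Aux2

variable {k : Type*} [Field k] {σ : Type*}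

/-- Combined denominator. -/
noncomputable def combD (pp : Polynomial k) (D₁ D₂ : MvPolynomial σ k) : MvPolynomial σ k :=
  ∑ j ∈ Finset.range (pp.natDegree + 1),
    MvPolynomial.C (pp.coeff j) * D₁ ^ j * D₂ ^ (pp.natDegree - j)

/-- Combined numerator. -/
noncomputable def combP (pp : Polynomial k) (P₁ D₁ P₂ D₂ : MvPolynomial σ k) :
    MvPolynomial σ k :=
  MvPolynomial.C (pp.coeff 0) * P₂ * D₂ ^ (pp.natDegree - 1) +
    ∑ j ∈ Finset.range pp.natDegree,
      MvPolynomial.C (pp.coeff (j + 1)) * P₁ * D₁ ^ j * D₂ ^ (pp.natDegree - 1 - j)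

noncomputable def comb (pp : Polynomial k)
    (e₁ e₂ : MvPolynomial σ k × MvPolynomial σ k) :
    MvPolynomial σ k × MvPolynomial σ k :=
  (combP pp e₁.1 e₁.2 e₂.1 e₂.2, combD pp e₁.2 e₂.2)

noncomputable def total (pp : Polynomial k)
    (L : List (MvPolynomial σ k × MvPolynomial σ k)) :
    MvPolynomial σ k × MvPolynomial σ k :=
  L.foldr (comb pp) (0, 0)

theorem eval_combD (pp : Polynomial k) (D₁ D₂ : MvPolynomial σ k) (y : σ → k) :
    eval y (combD pp D₁ D₂) = ∑ j ∈ Finset.range (pp.natDegree + 1),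
      pp.coeff j * (eval y D₁) ^ j * (eval y D₂) ^ (pp.natDegree - j) := by
  simp [combD]

theorem eval_combP (pp : Polynomial k) (P₁ D₁ P₂ D₂ : MvPolynomial σ k) (y : σ → k) :
    eval y (combP pp P₁ D₁ P₂ D₂) =
      pp.coeff 0 * eval y P₂ * (eval y D₂) ^ (pp.natDegree - 1) +
        ∑ j ∈ Finset.range pp.natDegree,
          pp.coeff (j + 1) * eval y P₁ * (eval y D₁) ^ j *
            (eval y D₂) ^ (pp.natDegree - 1 - j) := by
  simp [combP]

theorem st_comb (pp : Polynomial k) (hd : 1 ≤ pp.natDegree)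
    (Z : Set (σ → k)) (f : (σ → k) → k)
    (e₁ e₂ : MvPolynomial σ k × MvPolynomial σ k)
    (h₁ : ∀ y ∈ Z, f y * eval y e₁.2 = eval y e₁.1)
    (h₂ : ∀ y ∈ Z, f y * eval y e₂.2 = eval y e₂.1) :
    ∀ y ∈ Z, f y * eval y (comb pp e₁ e₂).2 = eval y (comb pp e₁ e₂).1 := by
  intro y hy
  show f y * eval y (combD pp e₁.2 e₂.2) = eval y (combP pp e₁.1 e₁.2 e₂.1 e₂.2)
  rw [eval_combD, eval_combP]
  exact Stmt19Aux.key_st (fun j => pp.coeff j) pp.natDegree hd (f y)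
    (eval y e₁.2) (eval y e₂.2) (eval y e₁.1) (eval y e₂.1) (h₁ y hy) (h₂ y hy)

theorem nz_comb (pp : Polynomial k) (hroot : ∀ a : k, pp.eval a ≠ 0)
    (hd : 1 ≤ pp.natDegree) (e₁ e₂ : MvPolynomial σ k × MvPolynomial σ k) (y : σ → k)
    (h : eval y (comb pp e₁ e₂).2 = 0) : eval y e₁.2 = 0 ∧ eval y e₂.2 = 0 := by
  have h' : eval y (combD pp e₁.2 e₂.2) = 0 := h
  rw [eval_combD] at h'
  exact Stmt19Aux.key_nz pp hroot hd _ _ h'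

theorem st_total (pp : Polynomial k) (hd : 1 ≤ pp.natDegree)
    (Z : Set (σ → k)) (f : (σ → k) → k)
    (L : List (MvPolynomial σ k × MvPolynomial σ k))
    (hL : ∀ e ∈ L, ∀ y ∈ Z, f y * eval y e.2 = eval y e.1) :
    ∀ y ∈ Z, f y * eval y (total pp L).2 = eval y (total pp L).1 := by
  induction L with
  | nil => intro y hy; simp [total]
  | cons e L ih =>
    have he := hL e List.mem_cons_self
    have hL' : ∀ e' ∈ L, ∀ y ∈ Z, f y * eval y e'.2 = eval y e'.1 :=
      fun e' he' => hL e' (List.mem_cons_of_mem e he')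
    exact st_comb pp hd Z f e (total pp L) he (ih hL')

theorem nz_total (pp : Polynomial k) (hroot : ∀ a : k, pp.eval a ≠ 0)
    (hd : 1 ≤ pp.natDegree)
    (L : List (MvPolynomial σ k × MvPolynomial σ k)) (y : σ → k)
    (h : eval y (total pp L).2 = 0) : ∀ e ∈ L, eval y e.2 = 0 := by
  induction L with
  | nil => intro e he; simp at he
  | cons e' L ih =>
    have h2 := nz_comb pp hroot hd e' (total pp L) y h
    intro e he
    rcases List.mem_cons.mp he with rfl | he
    · exact h2.1
    · exact ih h2.2 e he

end Stmt19Aux2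
open MvPolynomial Finset

section Main
variable {k : Type*} [Field k]

theorem stmt19' (hk : ¬ IsAlgClosed k) (n : ℕ)
    (Xv Z : Set (Fin n → k)) (hZ : ∃ S : Set (MvPolynomial (Fin n) k),
      Z = {x | ∀ p ∈ S, eval x p = 0}) (hZX : Z ⊆ Xv)
    (f : (Fin n → k) → k)
    (hf : ∀ x ∈ Z, ∃ p q : MvPolynomial (Fin n) k, eval x q ≠ 0 ∧
      ∀ y ∈ Z, eval y q ≠ 0 → f y = eval y p / eval y q) :
    ∃ F : (Fin n → k) → k,
      (∀ x ∈ Xv, ∃ p q : MvPolynomial (Fin n) k, eval x q ≠ 0 ∧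
        ∀ y ∈ Xv, eval y q ≠ 0 → F y = eval y p / eval y q) ∧
      ∀ z ∈ Z, F z = f z := by
  classical
  -- Step 1: a polynomial with no roots
  have hex : ∃ pp : Polynomial k, pp.Monic ∧ Irreducible pp ∧ ¬∃ x, pp.IsRoot x := by
    by_contra h
    push_neg at h
    exact hk (IsAlgClosed.of_exists_root k (fun p hm hi => h p hm hi))
  obtain ⟨pp, hm, hi, hnr⟩ := hex
  push_neg at hnr
  have hroot : ∀ a : k, pp.eval a ≠ 0 := fun a => hnr a
  have hd : 1 ≤ pp.natDegree := hi.natDegree_pos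
  -- Step 2: defining equations of Z
  obtain ⟨S_Z, hSZ⟩ := hZ
  have hmemZ : ∀ y, y ∈ Z ↔ ∀ s ∈ S_Z, eval y s = 0 := by
    intro y; rw [hSZ]; rfl
  -- Noetherian
  have hNoeth : ∀ I : Ideal (MvPolynomial (Fin n) k), I.FG :=
    (isNoetherianRing_iff_ideal_fg _).mp inferInstance
  -- finite generators for span S_Z
  obtain ⟨G₀, hG₀⟩ := hNoeth (Ideal.span S_Z)
  -- local representations
  choose p q hq hrep using hf
  set Q : Set (MvPolynomial (Fin n) k) :=
    {g | ∃ x : Fin n → k, ∃ hx : x ∈ Z, q x hx = g} with hQdef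
  set I : Ideal (MvPolynomial (Fin n) k) := Ideal.span (Q ∪ S_Z) with hIdef
  obtain ⟨G₁, hG₁⟩ := hNoeth I
  have hGmem : ∀ g ∈ G₁, ∃ t : Finset (MvPolynomial (Fin n) k),
      ↑t ⊆ Q ∪ S_Z ∧ g ∈ Ideal.span (t : Set (MvPolynomial (Fin n) k)) := by
    intro g hg
    have : g ∈ Ideal.span (Q ∪ S_Z) := by
      rw [← hIdef, ← hG₁]; exact Ideal.subset_span hg
    exact Submodule.mem_span_finite_of_mem_span this
  choose t ht₁ ht₂ using hGmem
  set T : Finset (MvPolynomial (Fin n) k) := G₁.attach.biUnion (fun g => t g.1 g.2) with hTdef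
  have hTsub : (T : Set (MvPolynomial (Fin n) k)) ⊆ Q ∪ S_Z := by
    intro u hu
    simp only [hTdef, Finset.coe_biUnion, Set.mem_iUnion, Finset.mem_coe] at hu
    obtain ⟨g, _, hu⟩ := hu
    exact ht₁ g.1 g.2 hu
  have hIT : I ≤ Ideal.span (T : Set (MvPolynomial (Fin n) k)) := by
    rw [← hG₁, Ideal.span_le]
    intro g hg
    have hsub : (t g hg : Set (MvPolynomial (Fin n) k)) ⊆ T := by
      intro u hu
      simp only [hTdef, Finset.coe_biUnion, Set.mem_iUnion, Finset.mem_coe]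
      exact ⟨⟨g, hg⟩, Finset.mem_attach _ _, hu⟩
    exact Ideal.span_mono hsub (ht₂ g hg)
  -- pairs for each generator
  have hpair : ∀ u ∈ T ∪ G₀, ∃ e : MvPolynomial (Fin n) k × MvPolynomial (Fin n) k,
      (∀ y ∈ Z, f y * eval y e.2 = eval y e.1) ∧
      (∀ y : Fin n → k, eval y u ≠ 0 → eval y e.2 ≠ 0) := by
    intro u hu
    have hvanish : (∀ y ∈ Z, eval y u = 0) →
        ∃ e : MvPolynomial (Fin n) k × MvPolynomial (Fin n) k,
          (∀ y ∈ Z, f y * eval y e.2 = eval y e.1) ∧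
          (∀ y : Fin n → k, eval y u ≠ 0 → eval y e.2 ≠ 0) := fun hv =>
      ⟨((0 : MvPolynomial (Fin n) k), u), fun y hy => by simp [hv y hy], fun y h0 => h0⟩
    rcases Finset.mem_union.mp hu with hu | hu
    · rcases hTsub hu with hQ | hS
      · obtain ⟨x, hx, rfl⟩ := hQ
        refine ⟨(p x hx * q x hx, q x hx ^ 2), ?_, ?_⟩
        · intro y hy
          by_cases h0 : eval y (q x hx) = 0
          · simp [h0]
          · have hfy := hrep x hx y hy h0
            rw [map_mul, map_pow]
            rw [hfy]
            field_simp
        · intro y h0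
          rw [map_pow]
          exact pow_ne_zero 2 h0
      · exact hvanish (fun y hy => (hmemZ y).mp hy u hS)
    · apply hvanish
      intro y hy
      have hker : Ideal.span S_Z ≤ RingHom.ker (eval y) :=
        Ideal.span_le.mpr (fun s hs => (hmemZ y).mp hy s hs)
      have hu' : u ∈ Ideal.span S_Z := by
        rw [← hG₀]; exact Ideal.subset_span hu
      exact hker hu'
  choose e he₁ he₂ using hpair
  set L : List (MvPolynomial (Fin n) k × MvPolynomial (Fin n) k) :=
    (T ∪ G₀).attach.toList.map (fun u => e u.1 u.2) with hLdef
  set P := (Stmt19Aux2.total pp L).1 with hPdef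
  set D := (Stmt19Aux2.total pp L).2 with hDdef
  have hLst : ∀ e' ∈ L, ∀ y ∈ Z, f y * eval y e'.2 = eval y e'.1 := by
    intro e' he'
    rw [hLdef] at he'
    obtain ⟨u, _, rfl⟩ := List.mem_map.mp he'
    exact he₁ u.1 u.2
  have hSt : ∀ y ∈ Z, f y * eval y D = eval y P :=
    Stmt19Aux2.st_total pp hd Z f L hLst
  have hDnz : ∀ x ∈ Xv, eval x D ≠ 0 := by
    intro x hx hcontra
    have hall := Stmt19Aux2.nz_total pp hroot hd L x hcontra
    have hallu : ∀ u ∈ T ∪ G₀, eval x u = 0 := by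
      intro u hu
      by_contra h0
      exact he₂ u hu x h0
        (hall (e u hu) (List.mem_map.mpr ⟨⟨u, hu⟩, by simp [Finset.mem_toList], rfl⟩))
    by_cases hxZ : x ∈ Z
    · have hqI : q x hxZ ∈ I := by
        rw [hIdef]
        exact Ideal.subset_span (Or.inl ⟨x, hxZ, rfl⟩)
      have hkerT : Ideal.span (T : Set (MvPolynomial (Fin n) k)) ≤ RingHom.ker (eval x) :=
        Ideal.span_le.mpr (fun s hs => hallu s (Finset.mem_union_left _ hs))
      exact hq x hxZ (hkerT (hIT hqI))
    · rw [hmemZ] at hxZ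
      push_neg at hxZ
      obtain ⟨s, hs, hs0⟩ := hxZ
      have hkerG : Ideal.span (G₀ : Set (MvPolynomial (Fin n) k)) ≤ RingHom.ker (eval x) :=
        Ideal.span_le.mpr (fun g hg => hallu g (Finset.mem_union_right _ hg))
      have : s ∈ Ideal.span (G₀ : Set (MvPolynomial (Fin n) k)) := by
        rw [hG₀]; exact Ideal.subset_span hs
      exact hs0 (hkerG this)
  refine ⟨fun y => eval y P / eval y D, ?_, ?_⟩
  · intro x hx
    exact ⟨P, D, hDnz x hx, fun y _ _ => rfl⟩
  · intro z hz
    have hD := hDnz z (hZX hz)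
    show eval z P / eval z D = f z
    rw [← hSt z hz]
    exact mul_div_cancel_right₀ (f z) hD

end Main

theorem stmt19 {k : Type*} [Field k] (hk : ¬ IsAlgClosed k) (n : ℕ)
    (Xv Z : Set (Fin n → k)) (hXv : IsAlgSet Xv) (hZ : IsAlgSet Z) (hZX : Z ⊆ Xv)
    (f : (Fin n → k) → k) (hf : RegularOn f Z) :
    ∃ F : (Fin n → k) → k, RegularOn F Xv ∧ ∀ z ∈ Z, F z = f z := by
  obtain ⟨F, h1, h2⟩ := stmt19' hk n Xv Z hZ hZX f hf
  exact ⟨F, h1, h2⟩
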